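/- Let 𝒜 be an epireflective class of topological spaces in which every member is a T0 space, and let ℬ be an AD-class in 𝒜. If ℬ is closed under prime factors (i.e., X_a ∈ ℬ for every X ∈ ℬ and every point a ∈ X), then ℬ is hereditary: every nonempty subspace of every member of ℬ belongs to ℬ. -/

import Mathlib

open Topology

universe u v w

/-- A class of topological spaces (underlying types in a fixed universe). -/
def SpaceClass : Type (u + 1) :=
  ∀ (X : Type u), TopologicalSpace X → Prop

/-- Closedness under homeomorphic copies. -/
def ClosedUnderHomeo (ℬ : SpaceClass.{u}) : Prop :=
  ∀ (X Y : Type u) (tX : TopologicalSpace X) (tY : TopologicalSpace Y),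
    Nonempty (@Homeomorph X Y tX tY) → ℬ X tX → ℬ Y tY

/-- An epireflective class: closed under homeomorphic copies, subspaces and
set-indexed topological products. -/
structure IsEpireflectiveClass (𝒜 : SpaceClass.{u}) : Prop where
  homeo : ClosedUnderHomeo 𝒜
  subspace : ∀ (X : Type u) (tX : TopologicalSpace X) (s : Set X),
    𝒜 X tX → 𝒜 s (TopologicalSpace.induced (Subtype.val : s → X) tX)
  prod : ∀ (ι : Type u) (Y : ι → Type u) (t : ∀ i, TopologicalSpace (Y i)),
    (∀ i, 𝒜 (Y i) (t i)) → 𝒜 (∀ i, Y i) (@Pi.topologicalSpace ι Y t)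

/-- The disjoint-union (topological sum) topology on a sigma type. -/
def sigmaTop {ι : Type v} (Y : ι → Type w) (t : ∀ i, TopologicalSpace (Y i)) :
    TopologicalSpace (Σ i, Y i) :=
  ⨆ i, TopologicalSpace.coinduced (Sigma.mk i) (t i)

/-- An AD-class in `𝒜`: a subclass of `𝒜` closed under homeomorphic copies, closed
under topological sums of arbitrary families of its members, and divisible in `𝒜`
(quotients in `𝒜` of members of `ℬ` belong to `ℬ`). -/
structure IsADClass (𝒜 ℬ : SpaceClass.{u}) : Prop where
  subset : ∀ (X : Type u) (tX : TopologicalSpace X), ℬ X tX → 𝒜 X tX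
  homeo : ClosedUnderHomeo ℬ
  sums : ∀ (ι : Type u) (Y : ι → Type u) (t : ∀ i, TopologicalSpace (Y i)),
    (∀ i, ℬ (Y i) (t i)) → ℬ (Σ i, Y i) (sigmaTop Y t)
  divisible : ∀ (X Z : Type u) (tX : TopologicalSpace X) (tZ : TopologicalSpace Z)
    (q : X → Z), ℬ X tX → 𝒜 Z tZ → @IsQuotientMap X Z tX tZ q → ℬ Z tZ

/-- A class is hereditary if every nonempty subspace of each member belongs to it. -/
def IsHereditary (ℬ : SpaceClass.{u}) : Prop :=
  ∀ (X : Type u) (tX : TopologicalSpace X) (s : Set X), s.Nonempty → ℬ X tX →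
    ℬ s (TopologicalSpace.induced (Subtype.val : s → X) tX)

/-- The prime factor `X_a`: the topology on the underlying set of `X` whose open sets
are exactly the sets `U` such that `a ∈ U` implies `U` is a neighbourhood of `a`. -/
def primeFactor {X : Type u} (t : TopologicalSpace X) (a : X) : TopologicalSpace X where
  IsOpen U := a ∈ U → U ∈ @nhds X t a
  isOpen_univ := fun _ => Filter.univ_mem
  isOpen_inter := fun U V hU hV h => Filter.inter_mem (hU h.1) (hV h.2)
  isOpen_sUnion := fun S hS h => by
    obtain ⟨U, hU, haU⟩ := h
    exact Filter.mem_of_superset (hS U hU haU) (Set.subset_sUnion_of_mem hU)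

/-- A prime space: a topological space with exactly one non-isolated point. -/
def IsPrimeSpace (X : Type u) (t : TopologicalSpace X) : Prop :=
  ∃! a : X, ¬ @IsOpen X t {a}

/-- If an AD-class `ℬ` in an epireflective class `𝒜` of T0 spaces is
closed under prime factors, then `ℬ` is hereditary. -/
theorem statement0 (𝒜 ℬ : SpaceClass.{u})
    (hA : IsEpireflectiveClass 𝒜)
    (hT0 : ∀ (X : Type u) (tX : TopologicalSpace X), 𝒜 X tX → @T0Space X tX)
    (hB : IsADClass 𝒜 ℬ)
    (hPF : ∀ (X : Type u) (tX : TopologicalSpace X) (a : X),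
      ℬ X tX → ℬ X (primeFactor tX a)) :
    IsHereditary ℬ := by
  classical
  intro X tX s _hs hX
  let t : ∀ _ : ↥s, TopologicalSpace X := fun a => primeFactor tX a.val
  let tSig : TopologicalSpace (Σ _ : ↥s, X) := sigmaTop (fun _ => X) t
  have hSig : ℬ (Σ _ : ↥s, X) tSig :=
    hB.sums s (fun _ => X) t (fun a => hPF X tX a.val hX)
  have hsA : 𝒜 s (TopologicalSpace.induced (Subtype.val : s → X) tX) :=
    hA.subspace X tX s (hB.subset X tX hX)
  let q : (Σ _ : ↥s, X) → s := fun p =>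
    if h : p.2 ∈ s then ⟨p.2, h⟩ else p.1
  refine hB.divisible _ _ tSig _ q hSig hsA ⟨?_, ?_⟩
  swap
  · intro b
    refine ⟨⟨b, b.val⟩, ?_⟩
    simp only [q, dif_pos b.2]
  · have hopen : ∀ W : Set (Σ _ : ↥s, X),
        IsOpen[tSig] W ↔ ∀ a : ↥s, a.val ∈ Sigma.mk a ⁻¹' W →
          (Sigma.mk a ⁻¹' W) ∈ @nhds X tX a.val := by
      intro W
      rw [show tSig = ⨆ a : ↥s,
        TopologicalSpace.coinduced (Sigma.mk a) (t a) from rfl, isOpen_iSup_iff]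
      exact Iff.rfl
    refine ⟨TopologicalSpace.ext_iff.2 fun U => ?_⟩
    rw [isOpen_coinduced, hopen, isOpen_induced_iff]
    constructor
    · rintro ⟨V, hV, rfl⟩ a ha
      have haV : a.val ∈ V := by
        have : q ⟨a, a.val⟩ ∈ Subtype.val ⁻¹' V := ha
        simpa [q, dif_pos a.2] using this
      have hVn : V ∈ @nhds X tX a.val := by
        letI := tX; exact hV.mem_nhds haV
      refine Filter.mem_of_superset hVn ?_
      intro x hxV
      show q ⟨a, x⟩ ∈ Subtype.val ⁻¹' V
      by_cases hxs : x ∈ s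
      · simpa [q, dif_pos hxs] using hxV
      · simpa [q, dif_neg hxs] using haV
    · intro h
      set W : ↥s → Set X := fun a => {x : X | q ⟨a, x⟩ ∈ U} with hW
      refine ⟨⋃ a : ↥U, @interior X tX (W a.val), ?_, ?_⟩
      · letI := tX
        exact isOpen_iUnion fun a => isOpen_interior
      · ext x
        simp only [Set.mem_preimage, Set.mem_iUnion]
        constructor
        · rintro ⟨a, hx⟩
          have hxW : x.val ∈ W a.val := by
            letI := tX; exact interior_subset hx
          have : q ⟨a.val, x.val⟩ ∈ U := hxW
          simpa [q, dif_pos x.2, Subtype.ext_iff] using this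
        · intro hxU
          refine ⟨⟨x, hxU⟩, ?_⟩
          have hxW : x.val ∈ W x := by
            show q ⟨x, x.val⟩ ∈ U
            simpa [q, dif_pos x.2] using hxU
          letI := tX
          exact mem_interior_iff_mem_nhds.2 (h x hxW)
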